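/- Let P = N(m, σ²) be Gaussian with σ² > 0 and let F = {N(θ, (σ*)²) : θ ∈ ℝ} be a Gaussian location family with fixed variance (σ*)². With log-loss, the η̄-strong central condition (E_P[exp(-η̄(ℓ_θ - ℓ_{θ*}))] ≤ 1 for all θ) holds if and only if η̄ ≤ (σ*)²/σ², where θ* = m is the KL-optimal location parameter. -/

import Mathlib

open MeasureTheory Real ProbabilityTheory
open scoped ENNReal NNReal

lemma gaussianPDFReal_mul_exp (m : ℝ) (v : NNReal) (hv : (v : ℝ) ≠ 0) (a b y : ℝ) :
    Real.exp (a * y + b) * gaussianPDFReal m v y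
      = Real.exp (a * m + a ^ 2 * v / 2 + b) * gaussianPDFReal (m + a * v) v y := by
  simp only [gaussianPDFReal]
  rw [show Real.exp (a * y + b) * ((√(2 * π * v))⁻¹ * rexp (-(y - m) ^ 2 / (2 * v)))
      = (√(2 * π * v))⁻¹ * (Real.exp (a * y + b) * rexp (-(y - m) ^ 2 / (2 * v))) by ring,
    show Real.exp (a * m + a ^ 2 * v / 2 + b) * ((√(2 * π * v))⁻¹ *
        rexp (-(y - (m + a * v)) ^ 2 / (2 * v)))
      = (√(2 * π * v))⁻¹ * (Real.exp (a * m + a ^ 2 * v / 2 + b) *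
        rexp (-(y - (m + a * v)) ^ 2 / (2 * v))) by ring]
  congr 1
  rw [← Real.exp_add, ← Real.exp_add]
  congr 1
  field_simp
  ring

lemma integral_exp_gaussianReal (m : ℝ) (v : NNReal) (hv : v ≠ 0) (a b : ℝ) :
    ∫ y, Real.exp (a * y + b) ∂(gaussianReal m v)
      = Real.exp (a * m + a ^ 2 * v / 2 + b) := by
  have hv' : (v : ℝ) ≠ 0 := by exact_mod_cast hv
  rw [gaussianReal_of_var_ne_zero m hv]
  have hd : gaussianPDF m v = fun x => ((gaussianPDFReal m v x).toNNReal : ℝ≥0∞) := by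
    ext x
    rw [gaussianPDF, ENNReal.ofReal]
  rw [hd, integral_withDensity_eq_integral_smul
      ((measurable_gaussianPDFReal m v).real_toNNReal)]
  have : ∀ y, (Real.toNNReal (gaussianPDFReal m v y)) • Real.exp (a * y + b)
      = Real.exp (a * m + a ^ 2 * v / 2 + b) * gaussianPDFReal (m + a * v) v y := by
    intro y
    rw [NNReal.smul_def, smul_eq_mul, Real.coe_toNNReal _ (gaussianPDFReal_nonneg m v y),
      mul_comm, gaussianPDFReal_mul_exp m v hv']
  rw [integral_congr_ae (Filter.Eventually.of_forall this), integral_const_mul,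
    integral_gaussianPDFReal_eq_one (m + a * v) hv, mul_one]

/-- For `P = N(m, σ²)` and the Gaussian location family `{N(θ, σ*²) : θ ∈ ℝ}`
with log-loss `ℓ_θ(y) = (y-θ)²/(2σ*²) + log (σ* √(2π))` (so that the excess
loss is `ℓ_θ - ℓ_m = ((y-θ)² - (y-m)²)/(2σ*²)`, `θ* = m` being the KL-optimal
location), the `η̄`-strong central condition holds iff `η̄ ≤ σ*²/σ²`. -/
theorem stmt2
    (m σ σs η : ℝ) (hσ : 0 < σ) (hσs : 0 < σs) (hη : 0 < η)
    (P : Measure ℝ) (hP : P = gaussianReal m (⟨σ ^ 2, by positivity⟩ : NNReal)) :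
    (∀ θ : ℝ,
        ∫ y, Real.exp (-η * (((y - θ) ^ 2 - (y - m) ^ 2) / (2 * σs ^ 2))) ∂P ≤ 1)
      ↔ η ≤ σs ^ 2 / σ ^ 2 := by
  have hv : (⟨σ ^ 2, by positivity⟩ : NNReal) ≠ 0 := by
    simp [← NNReal.coe_ne_zero]
    positivity
  have key : ∀ θ : ℝ,
      ∫ y, Real.exp (-η * (((y - θ) ^ 2 - (y - m) ^ 2) / (2 * σs ^ 2))) ∂P
        = Real.exp ((m - θ) ^ 2 * (η * σ ^ 2 - σs ^ 2) * η / (2 * σs ^ 4)) := by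
    intro θ
    have h1 : ∀ y : ℝ, -η * (((y - θ) ^ 2 - (y - m) ^ 2) / (2 * σs ^ 2))
        = (η * (θ - m) / σs ^ 2) * y + (-η * (θ ^ 2 - m ^ 2) / (2 * σs ^ 2)) := by
      intro y
      field_simp
      ring
    rw [hP]
    rw [integral_congr_ae (Filter.Eventually.of_forall fun y => by rw [h1 y])]
    rw [integral_exp_gaussianReal m _ hv]
    congr 1
    have hσs2 : σs ^ 2 ≠ 0 := by positivity
    change η * (θ - m) / σs ^ 2 * m + (η * (θ - m) / σs ^ 2) ^ 2 * σ ^ 2 / 2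
      + -η * (θ ^ 2 - m ^ 2) / (2 * σs ^ 2) = _
    field_simp
    ring
  constructor
  · intro h
    have h1 := h (m + 1)
    rw [key] at h1
    rw [Real.exp_le_one_iff] at h1
    have h2 : (m - (m + 1)) ^ 2 * (η * σ ^ 2 - σs ^ 2) * η / (2 * σs ^ 4)
        = (η * σ ^ 2 - σs ^ 2) * (η / (2 * σs ^ 4)) := by ring
    rw [h2] at h1
    have h3 : 0 < η / (2 * σs ^ 4) := by positivity
    have h4 : η * σ ^ 2 - σs ^ 2 ≤ 0 := by
      by_contra hc
      push_neg at hc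
      nlinarith
    rw [le_div_iff₀ (by positivity : (0:ℝ) < σ ^ 2)]
    linarith
  · intro h θ
    rw [key, Real.exp_le_one_iff]
    have h4 : η * σ ^ 2 - σs ^ 2 ≤ 0 := by
      rw [le_div_iff₀ (by positivity)] at h
      linarith
    have h5 : 0 ≤ (m - θ) ^ 2 := sq_nonneg _
    have h6 : 0 < 2 * σs ^ 4 := by positivity
    apply div_nonpos_of_nonpos_of_nonneg _ (le_of_lt h6)
    exact mul_nonpos_of_nonpos_of_nonneg (mul_nonpos_of_nonneg_of_nonpos h5 h4) hη.le
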